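/- Let H = F_3[R, r]/(relations from M_24 cohomology restricted to this subalgebra: R has degree 3, r has degree 4, R^2 = 0, Rr generates freely: H = F_3[r] ⊕ R·F_3[r]) with 3-differential D = P + ε·r where P(R) = Rr and P(r) = −r^2 (extended as a derivation), ε ∈ F_3. Then for ε = 1, the non-free part of H as an F_3[D]/(D^3)-module is span{1, r} (degrees 0→4); for ε = −1 it is span{R} (degree 3); for ε = 0 it is span{1} ⊕ span{R, Rr} (degrees 0 and 3→7). -/
import Mathlib


open Polynomial

/-- The 3-differential `D = P + ε·r` on `H = F₃[r] ⊕ R·F₃[r]` (deg r = 4, deg R = 3, R² = 0),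
where `P` is the derivation with `P(r) = −r²`, `P(R) = R r`.  We model `f(r) + R·g(r)` as the
pair `(f, g)`; then `D(f, g) = (ε X f − X² f', (1+ε) X g − X² g')`. -/
noncomputable def D17 (ε : ZMod 3) :
    (Polynomial (ZMod 3) × Polynomial (ZMod 3)) →ₗ[ZMod 3]
      (Polynomial (ZMod 3) × Polynomial (ZMod 3)) :=
  LinearMap.prodMap
    (ε • LinearMap.mulLeft (ZMod 3) X -
      (LinearMap.mulLeft (ZMod 3) (X ^ 2)).comp
        (derivative : Polynomial (ZMod 3) →ₗ[ZMod 3] Polynomial (ZMod 3)))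
    ((1 + ε) • LinearMap.mulLeft (ZMod 3) X -
      (LinearMap.mulLeft (ZMod 3) (X ^ 2)).comp
        (derivative : Polynomial (ZMod 3) →ₗ[ZMod 3] Polynomial (ZMod 3)))

/-- `W` is a `D`-invariant submodule which is a free `F₃[D]/(D³)`-module. -/
def IsFreeInv {V : Type*} [AddCommGroup V] [Module (ZMod 3) V]
    (D : V →ₗ[ZMod 3] V) (W : Submodule (ZMod 3) V) : Prop :=
  (∀ w ∈ W, D w ∈ W) ∧ ∀ w ∈ W, D w = 0 → ∃ u ∈ W, D (D u) = w

noncomputable def Da (a : ZMod 3) : Polynomial (ZMod 3) →ₗ[ZMod 3] Polynomial (ZMod 3) :=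
  a • LinearMap.mulLeft (ZMod 3) X -
    (LinearMap.mulLeft (ZMod 3) (X ^ 2)).comp
      (derivative : Polynomial (ZMod 3) →ₗ[ZMod 3] Polynomial (ZMod 3))

lemma Da_apply (a : ZMod 3) (f : Polynomial (ZMod 3)) :
    Da a f = a • (X * f) - X ^ 2 * derivative f := rfl

lemma Da_coeff_zero (a : ZMod 3) (f : Polynomial (ZMod 3)) : (Da a f).coeff 0 = 0 := by
  simp [Da_apply, coeff_zero_eq_eval_zero]

lemma Da_coeff_succ (a : ZMod 3) (f : Polynomial (ZMod 3)) (k : ℕ) :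
    (Da a f).coeff (k + 1) = (a - (k : ZMod 3)) * f.coeff k := by
  rw [Da_apply]
  cases k with
  | zero =>
    have : (X ^ 2 * derivative f).coeff 1 = 0 := by
      rw [pow_two, mul_assoc, coeff_X_mul]
      simp [coeff_zero_eq_eval_zero]
    simp [coeff_X_mul, this]
  | succ k =>
    have : (X ^ 2 * derivative f).coeff (k + 1 + 1) = f.coeff (k + 1) * (k + 1) := by
      rw [show k + 1 + 1 = k + 2 by ring, coeff_X_pow_mul, coeff_derivative]
    rw [coeff_sub, this, coeff_smul, coeff_X_mul, smul_eq_mul]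
    push_cast
    ring

lemma Da_cube (a : ZMod 3) (f : Polynomial (ZMod 3)) : Da a (Da a (Da a f)) = 0 := by
  ext k
  rcases k with _ | _ | _ | k
  · simp [Da_coeff_zero]
  · simp [Da_coeff_succ, Da_coeff_zero]
  · simp [Da_coeff_succ, Da_coeff_zero]
  · rw [Da_coeff_succ, Da_coeff_succ, Da_coeff_succ, coeff_zero]
    have key : ∀ x : ZMod 3, (x - 2) * ((x - 1) * x) = 0 := by decide
    have := key (a - (k : ZMod 3))
    push_cast
    calc (a - ((k:ZMod 3) + 2)) * ((a - ((k:ZMod 3) + 1)) * ((a - (k:ZMod 3)) * f.coeff k))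
        = ((a - (k:ZMod 3) - 2) * ((a - (k:ZMod 3) - 1) * (a - (k:ZMod 3)))) * f.coeff k := by ring
      _ = 0 := by rw [this, zero_mul]

def ta (a : ZMod 3) : ℕ := if a = 0 then 1 else if a = 1 then 2 else 0

noncomputable def Wa (a : ZMod 3) : Submodule (ZMod 3) (Polynomial (ZMod 3)) where
  carrier := {f | ∀ n < ta a, f.coeff n = 0}
  add_mem' := by intro f g hf hg n hn; simp [hf n hn, hg n hn]
  zero_mem' := by intro n hn; simp
  smul_mem' := by intro c f hf n hn; simp [hf n hn]

lemma mem_Wa {a : ZMod 3} {f : Polynomial (ZMod 3)} : f ∈ Wa a ↔ ∀ n < ta a, f.coeff n = 0 :=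
  Iff.rfl

lemma Wa_inv (a : ZMod 3) (f : Polynomial (ZMod 3)) (hf : f ∈ Wa a) : Da a f ∈ Wa a := by
  intro n hn
  cases n with
  | zero => exact Da_coeff_zero a f
  | succ m =>
    rw [Da_coeff_succ, hf m (by omega), mul_zero]

lemma ker_coeff {a : ZMod 3} {f : Polynomial (ZMod 3)} (h : Da a f = 0) (k : ℕ) :
    (a - (k : ZMod 3)) * f.coeff k = 0 := by
  have := congrArg (fun p => Polynomial.coeff p (k + 1)) h
  simpa [Da_coeff_succ] using this

lemma Wa_free (a : ZMod 3) (f : Polynomial (ZMod 3)) (hf : f ∈ Wa a) (hker : Da a f = 0) :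
    ∃ u ∈ Wa a, Da a (Da a u) = f := by
  have key := ker_coeff hker
  have h0 : f.coeff 0 = 0 := by
    by_cases ha : a = 0
    · exact hf 0 (by rw [ha]; simp [ta])
    · have := key 0
      push_cast at this
      rcases mul_eq_zero.1 this with h | h
      · exact absurd (by rwa [sub_zero] at h) ha
      · exact h
  have h1 : f.coeff 1 = 0 := by
    by_cases ha : a = 1
    · exact hf 1 (by rw [ha]; simp [ta])
    · have := key 1
      push_cast at this
      rcases mul_eq_zero.1 this with h | h
      · exact absurd (sub_eq_zero.1 h) ha
      · exact h
  refine ⟨-(f.divX.divX), ?_, ?_⟩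
  · intro n hn
    have hcoeff : (-(f.divX.divX)).coeff n = -(f.coeff (n + 2)) := by
      simp [coeff_divX]
    rw [hcoeff, neg_eq_zero]
    have hne : (a - ((n + 2 : ℕ) : ZMod 3)) ≠ 0 := by
      have hta : ta a ≤ 2 := by unfold ta; split_ifs <;> omega
      have hn2 : n < 2 := by omega
      interval_cases n <;> revert hn <;> fin_cases a <;> simp [ta] <;> decide
    have := key (n + 2)
    rcases mul_eq_zero.1 this with h | h
    · exact absurd h hne
    · exact h
  · ext k
    rcases k with _ | _ | k
    · rw [Da_coeff_zero, h0]
    · rw [show (1:ℕ) = 0 + 1 from rfl, Da_coeff_succ, Da_coeff_zero, mul_zero, h1]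
    · rw [show k + 1 + 1 = (k + 1) + 1 from rfl, Da_coeff_succ, Da_coeff_succ]
      have hu : (-(f.divX.divX)).coeff k = -(f.coeff (k + 2)) := by simp [coeff_divX]
      rw [hu]
      have hk := key (k + 2)
      have aux : ∀ x c : ZMod 3, (x - 2) * c = 0 → (x - 1) * (x * (-c)) = c := by decide
      have := aux (a - (k : ZMod 3)) (f.coeff (k + 2)) (by push_cast at hk ⊢; linear_combination hk)
      push_cast
      linear_combination this

lemma D17_eq (ε : ZMod 3) : D17 ε = (Da ε).prodMap (Da (1 + ε)) := rfl

lemma span_inv {V : Type*} [AddCommGroup V] [Module (ZMod 3) V] (D : V →ₗ[ZMod 3] V)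
    (S : Set V) (h : ∀ x ∈ S, D x ∈ Submodule.span (ZMod 3) S) :
    ∀ w ∈ Submodule.span (ZMod 3) S, D w ∈ Submodule.span (ZMod 3) S := fun w hw => by
  have hle : Submodule.span (ZMod 3) S ≤ (Submodule.span (ZMod 3) S).comap D :=
    Submodule.span_le.2 (fun x hx => h x hx)
  exact hle hw

lemma isFreeInv_prod (a b : ZMod 3) :
    IsFreeInv ((Da a).prodMap (Da b)) ((Wa a).prod (Wa b)) := by
  constructor
  · rintro ⟨f, g⟩ ⟨hf, hg⟩
    exact ⟨Wa_inv a f hf, Wa_inv b g hg⟩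
  · rintro ⟨f, g⟩ ⟨hf, hg⟩ hD
    have h1 : Da a f = 0 := congrArg Prod.fst hD
    have h2 : Da b g = 0 := congrArg Prod.snd hD
    obtain ⟨u, hu, hu2⟩ := Wa_free a f hf h1
    obtain ⟨v, hv, hv2⟩ := Wa_free b g hg h2
    exact ⟨(u, v), ⟨hu, hv⟩, Prod.ext hu2 hv2⟩

lemma coeff0_smul_one (c : ZMod 3) : (c • (1 : Polynomial (ZMod 3))).coeff 0 = c := by
  simp only [coeff_smul, coeff_one_zero, smul_eq_mul, mul_one]

lemma coeff0_combo (u v : ZMod 3) :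
    (u • (1 : Polynomial (ZMod 3)) + v • X).coeff 0 = u := by
  simp only [coeff_add, coeff_smul, coeff_one_zero, coeff_X_zero, smul_eq_mul, mul_one,
    mul_zero, add_zero]

lemma coeff1_combo (u v : ZMod 3) :
    (u • (1 : Polynomial (ZMod 3)) + v • X).coeff 1 = v := by
  simp only [coeff_add, coeff_smul, coeff_one, coeff_X_one, smul_eq_mul, mul_one, mul_zero,
    if_neg (by norm_num : ¬(1 : ℕ) = 0), zero_add]

lemma pair1 (c : ZMod 3) :
    c • (((1 : Polynomial (ZMod 3)), (0 : Polynomial (ZMod 3)))) = (c • 1, 0) := by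
  refine Prod.ext ?_ ?_ <;>
    simp only [Prod.smul_fst, Prod.smul_snd, smul_zero]

lemma pair2 (u v : ZMod 3) :
    u • (((0 : Polynomial (ZMod 3)), (1 : Polynomial (ZMod 3)))) +
      v • (((0 : Polynomial (ZMod 3)), X)) = (0, u • 1 + v • X) := by
  refine Prod.ext ?_ ?_ <;>
    simp only [Prod.fst_add, Prod.snd_add, Prod.smul_fst, Prod.smul_snd, smul_zero, add_zero]

lemma pair3 (u v : ZMod 3) :
    u • (((1 : Polynomial (ZMod 3)), (0 : Polynomial (ZMod 3)))) +
      v • ((X, (0 : Polynomial (ZMod 3)))) = (u • 1 + v • X, 0) := by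
  refine Prod.ext ?_ ?_ <;>
    simp only [Prod.fst_add, Prod.snd_add, Prod.smul_fst, Prod.smul_snd, smul_zero, add_zero]

lemma pair4 (c : ZMod 3) :
    c • (((0 : Polynomial (ZMod 3)), (1 : Polynomial (ZMod 3)))) = (0, c • 1) := by
  refine Prod.ext ?_ ?_ <;>
    simp only [Prod.smul_fst, Prod.smul_snd, smul_zero]

lemma q0 (c u v : ZMod 3) :
    c • (((1 : Polynomial (ZMod 3)), (0 : Polynomial (ZMod 3)))) +
      (u • (((0 : Polynomial (ZMod 3)), (1 : Polynomial (ZMod 3)))) +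
       v • (((0 : Polynomial (ZMod 3)), X))) = (c • 1, u • 1 + v • X) := by
  refine Prod.ext ?_ ?_ <;>
    simp only [Prod.fst_add, Prod.snd_add, Prod.smul_fst, Prod.smul_snd, smul_zero, add_zero,
      zero_add]

lemma trunc0 (f : Polynomial (ZMod 3)) : ∀ n < 1, (f - C (f.coeff 0)).coeff n = 0 := by
  intro n hn
  have : n = 0 := by omega
  subst this
  simp only [coeff_sub, coeff_C_zero, sub_self]

lemma trunc1 (g : Polynomial (ZMod 3)) :
    ∀ n < 2, (g - C (g.coeff 0) - C (g.coeff 1) * X).coeff n = 0 := by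
  intro n hn
  interval_cases n
  · simp only [coeff_sub, coeff_C_zero, coeff_C_mul, coeff_X_zero, mul_zero, sub_zero, sub_self]
  · simp only [coeff_sub, coeff_C, coeff_C_mul, coeff_X_one, mul_one,
      if_neg (by norm_num : ¬(1 : ℕ) = 0), sub_zero, sub_self]

/-- `D = P + ε r` satisfies `D³ = 0` on `H = F₃[r] ⊕ R F₃[r]`, and the non-free part of `H`
as an `F₃[D]/(D³)`-module is: for `ε = 1`, `span{1, r}`; for `ε = −1`, `span{R}`; for `ε = 0`,
`span{1} ⊕ span{R, Rr}`.  (Here `1 = (1,0)`, `r = (X,0)`, `R = (0,1)`, `Rr = (0,X)`.) -/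
theorem stmt17 :
    (∀ ε : ZMod 3, ∀ v, D17 ε (D17 ε (D17 ε v)) = 0) ∧
    (∃ W, IsFreeInv (D17 0) W ∧
      (∀ w ∈ Submodule.span (ZMod 3)
          ({((1 : Polynomial (ZMod 3)), (0 : Polynomial (ZMod 3)))} :
            Set (Polynomial (ZMod 3) × Polynomial (ZMod 3))),
        D17 0 w ∈ Submodule.span (ZMod 3)
          ({((1 : Polynomial (ZMod 3)), (0 : Polynomial (ZMod 3)))} :
            Set (Polynomial (ZMod 3) × Polynomial (ZMod 3)))) ∧
      (∀ w ∈ Submodule.span (ZMod 3)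
          ({((0 : Polynomial (ZMod 3)), (1 : Polynomial (ZMod 3))),
            ((0 : Polynomial (ZMod 3)), X)} :
            Set (Polynomial (ZMod 3) × Polynomial (ZMod 3))),
        D17 0 w ∈ Submodule.span (ZMod 3)
          ({((0 : Polynomial (ZMod 3)), (1 : Polynomial (ZMod 3))),
            ((0 : Polynomial (ZMod 3)), X)} :
            Set (Polynomial (ZMod 3) × Polynomial (ZMod 3)))) ∧
      Submodule.span (ZMod 3)
          ({((1 : Polynomial (ZMod 3)), (0 : Polynomial (ZMod 3)))} :
            Set (Polynomial (ZMod 3) × Polynomial (ZMod 3))) ⊓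
        Submodule.span (ZMod 3)
          ({((0 : Polynomial (ZMod 3)), (1 : Polynomial (ZMod 3))),
            ((0 : Polynomial (ZMod 3)), X)} :
            Set (Polynomial (ZMod 3) × Polynomial (ZMod 3))) = ⊥ ∧
      W ⊓ (Submodule.span (ZMod 3)
          ({((1 : Polynomial (ZMod 3)), (0 : Polynomial (ZMod 3)))} :
            Set (Polynomial (ZMod 3) × Polynomial (ZMod 3))) ⊔
        Submodule.span (ZMod 3)
          ({((0 : Polynomial (ZMod 3)), (1 : Polynomial (ZMod 3))),
            ((0 : Polynomial (ZMod 3)), X)} :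
            Set (Polynomial (ZMod 3) × Polynomial (ZMod 3)))) = ⊥ ∧
      W ⊔ (Submodule.span (ZMod 3)
          ({((1 : Polynomial (ZMod 3)), (0 : Polynomial (ZMod 3)))} :
            Set (Polynomial (ZMod 3) × Polynomial (ZMod 3))) ⊔
        Submodule.span (ZMod 3)
          ({((0 : Polynomial (ZMod 3)), (1 : Polynomial (ZMod 3))),
            ((0 : Polynomial (ZMod 3)), X)} :
            Set (Polynomial (ZMod 3) × Polynomial (ZMod 3)))) = ⊤) ∧
    (∃ W, IsFreeInv (D17 1) W ∧
      (∀ w ∈ Submodule.span (ZMod 3)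
          ({((1 : Polynomial (ZMod 3)), (0 : Polynomial (ZMod 3))),
            (X, (0 : Polynomial (ZMod 3)))} :
            Set (Polynomial (ZMod 3) × Polynomial (ZMod 3))),
        D17 1 w ∈ Submodule.span (ZMod 3)
          ({((1 : Polynomial (ZMod 3)), (0 : Polynomial (ZMod 3))),
            (X, (0 : Polynomial (ZMod 3)))} :
            Set (Polynomial (ZMod 3) × Polynomial (ZMod 3)))) ∧
      W ⊓ Submodule.span (ZMod 3)
          ({((1 : Polynomial (ZMod 3)), (0 : Polynomial (ZMod 3))),
            (X, (0 : Polynomial (ZMod 3)))} :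
            Set (Polynomial (ZMod 3) × Polynomial (ZMod 3))) = ⊥ ∧
      W ⊔ Submodule.span (ZMod 3)
          ({((1 : Polynomial (ZMod 3)), (0 : Polynomial (ZMod 3))),
            (X, (0 : Polynomial (ZMod 3)))} :
            Set (Polynomial (ZMod 3) × Polynomial (ZMod 3))) = ⊤) ∧
    (∃ W, IsFreeInv (D17 (-1)) W ∧
      (∀ w ∈ Submodule.span (ZMod 3)
          ({((0 : Polynomial (ZMod 3)), (1 : Polynomial (ZMod 3)))} :
            Set (Polynomial (ZMod 3) × Polynomial (ZMod 3))),
        D17 (-1) w ∈ Submodule.span (ZMod 3)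
          ({((0 : Polynomial (ZMod 3)), (1 : Polynomial (ZMod 3)))} :
            Set (Polynomial (ZMod 3) × Polynomial (ZMod 3)))) ∧
      W ⊓ Submodule.span (ZMod 3)
          ({((0 : Polynomial (ZMod 3)), (1 : Polynomial (ZMod 3)))} :
            Set (Polynomial (ZMod 3) × Polynomial (ZMod 3))) = ⊥ ∧
      W ⊔ Submodule.span (ZMod 3)
          ({((0 : Polynomial (ZMod 3)), (1 : Polynomial (ZMod 3)))} :
            Set (Polynomial (ZMod 3) × Polynomial (ZMod 3))) = ⊤) := by
  refine ⟨?_, ?_, ?_, ?_⟩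
  · -- D³ = 0
    intro ε v
    rw [D17_eq]
    exact Prod.ext (Da_cube ε v.1) (Da_cube (1 + ε) v.2)
  · -- ε = 0
    refine ⟨(Wa 0).prod (Wa 1), by rw [D17_eq]; exact isFreeInv_prod 0 1, ?_, ?_, ?_, ?_, ?_⟩
    · apply span_inv
      rintro x rfl
      have : D17 0 ((1 : Polynomial (ZMod 3)), (0 : Polynomial (ZMod 3))) = 0 := by
        rw [D17_eq]
        refine Prod.ext ?_ ?_ <;> simp [Da_apply]
      rw [this]
      exact Submodule.zero_mem _
    · apply span_inv
      rintro x (rfl | rfl)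
      · have : D17 0 ((0 : Polynomial (ZMod 3)), (1 : Polynomial (ZMod 3)))
            = ((0 : Polynomial (ZMod 3)), X) := by
          rw [D17_eq]
          refine Prod.ext ?_ ?_ <;> simp [Da_apply]
        rw [this]
        exact Submodule.subset_span (by simp)
      · have : D17 0 ((0 : Polynomial (ZMod 3)), X) = 0 := by
          rw [D17_eq]
          refine Prod.ext ?_ ?_ <;> simp [Da_apply] <;> ring
        rw [this]
        exact Submodule.zero_mem _
    · -- S1 ⊓ S2 = ⊥
      rw [Submodule.eq_bot_iff]
      rintro x ⟨hx1, hx2⟩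
      obtain ⟨c, rfl⟩ := Submodule.mem_span_singleton.1 hx1
      obtain ⟨u, v, huv⟩ := Submodule.mem_span_pair.1 hx2
      rw [pair1] at huv ⊢
      rw [pair2] at huv
      have h1 : (0 : Polynomial (ZMod 3)) = c • 1 := congrArg Prod.fst huv
      rw [← h1]
      rfl
    · -- W ⊓ (S1 ⊔ S2) = ⊥
      rw [Submodule.eq_bot_iff]
      rintro x ⟨hxW, hxS⟩
      obtain ⟨y, hy, z, hz, rfl⟩ := Submodule.mem_sup.1 hxS
      obtain ⟨c, rfl⟩ := Submodule.mem_span_singleton.1 hy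
      obtain ⟨u, v, rfl⟩ := Submodule.mem_span_pair.1 hz
      rw [q0] at hxW ⊢
      have hW1 : (c • (1 : Polynomial (ZMod 3))) ∈ Wa 0 := (Submodule.mem_prod.1 hxW).1
      have hW2 : (u • (1 : Polynomial (ZMod 3)) + v • X) ∈ Wa 1 := (Submodule.mem_prod.1 hxW).2
      rw [mem_Wa] at hW1 hW2
      have hc : c = 0 := by
        have := hW1 0 (by decide)
        rwa [coeff0_smul_one] at this
      have hu : u = 0 := by
        have := hW2 0 (by decide)
        rwa [coeff0_combo] at this
      have hv : v = 0 := by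
        have := hW2 1 (by decide)
        rwa [coeff1_combo] at this
      rw [hc, hu, hv]
      simp only [zero_smul, add_zero, zero_add]
      rfl
    · -- W ⊔ (S1 ⊔ S2) = ⊤
      rw [eq_top_iff]
      rintro ⟨f, g⟩ -
      have hdecomp : ((f, g) : Polynomial (ZMod 3) × Polynomial (ZMod 3)) =
          (f - C (f.coeff 0), g - C (g.coeff 0) - C (g.coeff 1) * X) +
          (((f.coeff 0) • ((1 : Polynomial (ZMod 3)), (0 : Polynomial (ZMod 3)))) +
           ((g.coeff 0) • ((0 : Polynomial (ZMod 3)), (1 : Polynomial (ZMod 3))) +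
            (g.coeff 1) • ((0 : Polynomial (ZMod 3)), X))) := by
        refine Prod.ext ?_ ?_ <;>
          simp only [Prod.fst_add, Prod.snd_add, Prod.smul_fst, Prod.smul_snd, smul_zero,
            add_zero, zero_add, smul_eq_C_mul] <;> ring
      rw [hdecomp]
      refine Submodule.add_mem_sup (Submodule.mem_prod.2 ⟨?_, ?_⟩) (Submodule.add_mem _ ?_ ?_)
      · rw [mem_Wa]
        intro n hn
        exact trunc0 f n (by rw [show ta 0 = 1 by decide] at hn; exact hn)
      · rw [mem_Wa]
        intro n hn
        exact trunc1 g n (by rw [show ta 1 = 2 by decide] at hn; exact hn)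
      · exact Submodule.mem_sup_left
          (Submodule.smul_mem _ _ (Submodule.subset_span rfl))
      · refine Submodule.mem_sup_right (Submodule.add_mem _ ?_ ?_)
        · exact Submodule.smul_mem _ _ (Submodule.subset_span (by simp))
        · exact Submodule.smul_mem _ _ (Submodule.subset_span (by simp))
  · -- ε = 1
    refine ⟨(Wa 1).prod (Wa 2), by rw [D17_eq]; exact isFreeInv_prod 1 2, ?_, ?_, ?_⟩
    · apply span_inv
      rintro x (rfl | rfl)
      · have : D17 1 ((1 : Polynomial (ZMod 3)), (0 : Polynomial (ZMod 3)))
            = (X, (0 : Polynomial (ZMod 3))) := by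
          rw [D17_eq]
          refine Prod.ext ?_ ?_ <;> simp [Da_apply]
        rw [this]
        exact Submodule.subset_span (by simp)
      · have : D17 1 (X, (0 : Polynomial (ZMod 3))) = 0 := by
          rw [D17_eq]
          refine Prod.ext ?_ ?_ <;> simp [Da_apply] <;> ring
        rw [this]
        exact Submodule.zero_mem _
    · rw [Submodule.eq_bot_iff]
      rintro x ⟨hxW, hxS⟩
      obtain ⟨u, v, rfl⟩ := Submodule.mem_span_pair.1 hxS
      rw [pair3] at hxW ⊢
      have hW1 : (u • (1 : Polynomial (ZMod 3)) + v • X) ∈ Wa 1 := (Submodule.mem_prod.1 hxW).1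
      rw [mem_Wa] at hW1
      have hu : u = 0 := by
        have := hW1 0 (by decide)
        rwa [coeff0_combo] at this
      have hv : v = 0 := by
        have := hW1 1 (by decide)
        rwa [coeff1_combo] at this
      rw [hu, hv]
      simp only [zero_smul, add_zero, zero_add]
      rfl
    · rw [eq_top_iff]
      rintro ⟨f, g⟩ -
      have hdecomp : ((f, g) : Polynomial (ZMod 3) × Polynomial (ZMod 3)) =
          (f - C (f.coeff 0) - C (f.coeff 1) * X, g) +
          ((f.coeff 0) • ((1 : Polynomial (ZMod 3)), (0 : Polynomial (ZMod 3))) +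
           (f.coeff 1) • (X, (0 : Polynomial (ZMod 3)))) := by
        refine Prod.ext ?_ ?_ <;>
          simp only [Prod.fst_add, Prod.snd_add, Prod.smul_fst, Prod.smul_snd, smul_zero,
            add_zero, zero_add, smul_eq_C_mul] <;> ring
      rw [hdecomp]
      refine Submodule.add_mem_sup (Submodule.mem_prod.2 ⟨?_, ?_⟩) (Submodule.add_mem _ ?_ ?_)
      · rw [mem_Wa]
        intro n hn
        exact trunc1 f n (by rw [show ta 1 = 2 by decide] at hn; exact hn)
      · rw [mem_Wa]
        intro n hn
        rw [show ta 2 = 0 by decide] at hn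
        omega
      · exact Submodule.smul_mem _ _ (Submodule.subset_span (by simp))
      · exact Submodule.smul_mem _ _ (Submodule.subset_span (by simp))
  · -- ε = -1
    refine ⟨(Wa (-1)).prod (Wa (1 + -1)),
      by rw [D17_eq]; exact isFreeInv_prod (-1) (1 + -1), ?_, ?_, ?_⟩
    · apply span_inv
      rintro x rfl
      have : D17 (-1) ((0 : Polynomial (ZMod 3)), (1 : Polynomial (ZMod 3))) = 0 := by
        rw [D17_eq]
        refine Prod.ext ?_ ?_ <;> simp [Da_apply]
      rw [this]
      exact Submodule.zero_mem _
    · rw [Submodule.eq_bot_iff]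
      rintro x ⟨hxW, hxS⟩
      obtain ⟨c, rfl⟩ := Submodule.mem_span_singleton.1 hxS
      rw [pair4] at hxW ⊢
      have hW2 : (c • (1 : Polynomial (ZMod 3))) ∈ Wa (1 + -1) := (Submodule.mem_prod.1 hxW).2
      rw [mem_Wa] at hW2
      have hc : c = 0 := by
        have := hW2 0 (by decide)
        rwa [coeff0_smul_one] at this
      rw [hc]
      simp only [zero_smul]
      rfl
    · rw [eq_top_iff]
      rintro ⟨f, g⟩ -
      have hdecomp : ((f, g) : Polynomial (ZMod 3) × Polynomial (ZMod 3)) =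
          (f, g - C (g.coeff 0)) +
          (g.coeff 0) • ((0 : Polynomial (ZMod 3)), (1 : Polynomial (ZMod 3))) := by
        refine Prod.ext ?_ ?_ <;>
          simp only [Prod.fst_add, Prod.snd_add, Prod.smul_fst, Prod.smul_snd, smul_zero,
            add_zero, zero_add, smul_eq_C_mul] <;> ring
      rw [hdecomp]
      refine Submodule.add_mem_sup (Submodule.mem_prod.2 ⟨?_, ?_⟩)
        (Submodule.smul_mem _ _ (Submodule.subset_span rfl))
      · rw [mem_Wa]
        intro n hn
        rw [show ta (-1) = 0 by decide] at hn
        omega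
      · rw [mem_Wa]
        intro n hn
        exact trunc0 g n (by rw [show ta (1 + -1) = 1 by decide] at hn; exact hn)
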